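/- Let a, b be positive reals with a ≤ b. Then ((a²+b²)/b)·arctan(b/a) < √(a²+b²)·(π/2 − arctan(b/a)) + √(a²+b²)·arctan(b/a), i.e., |AB~| < |BC~| + |CA~| for a right-angled bulging triangle. -/

import Mathlib

open Real

theorem right_bulging_triangle_ineq (a b : ℝ) (ha : 0 < a) (hb : 0 < b) (hab : a ≤ b) :
    (a ^ 2 + b ^ 2) / b * Real.arctan (b / a) <
      Real.sqrt (a ^ 2 + b ^ 2) * (π / 2 - Real.arctan (b / a)) +
        Real.sqrt (a ^ 2 + b ^ 2) * Real.arctan (b / a) := by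
  have hs : (0:ℝ) < a ^ 2 + b ^ 2 := by positivity
  have hsq : 0 < Real.sqrt (a ^ 2 + b ^ 2) := Real.sqrt_pos.2 hs
  set θ := Real.arctan (b / a) with hθdef
  have hθpos : 0 < θ := by
    have := Real.arctan_strictMono (show (0:ℝ) < b / a by positivity)
    rw [Real.arctan_zero] at this; exact this
  have hθlt : θ < π / 2 := Real.arctan_lt_pi_div_two _
  have hsin : Real.sin θ = b / Real.sqrt (a ^ 2 + b ^ 2) := by
    rw [hθdef, Real.sin_arctan]
    rw [show (1 : ℝ) + (b / a) ^ 2 = (a ^ 2 + b ^ 2) / a ^ 2 by field_simp]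
    rw [Real.sqrt_div hs.le, Real.sqrt_sq ha.le]
    field_simp
  have hjordan : 2 / π * θ < Real.sin θ := Real.mul_lt_sin hθpos hθlt
  rw [hsin] at hjordan
  have hπ : 0 < π := Real.pi_pos
  have h1 : θ < π / 2 * (b / Real.sqrt (a ^ 2 + b ^ 2)) := by
    calc θ = π / 2 * (2 / π * θ) := by field_simp
      _ < π / 2 * (b / Real.sqrt (a ^ 2 + b ^ 2)) :=
          (mul_lt_mul_iff_right₀ (by positivity)).2 hjordan
  have key : θ * Real.sqrt (a ^ 2 + b ^ 2) < π / 2 * b := by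
    have h2 := mul_lt_mul_of_pos_right h1 hsq
    calc θ * Real.sqrt (a ^ 2 + b ^ 2)
        < π / 2 * (b / Real.sqrt (a ^ 2 + b ^ 2)) * Real.sqrt (a ^ 2 + b ^ 2) := h2
      _ = π / 2 * b := by field_simp
  have hsqsq : Real.sqrt (a ^ 2 + b ^ 2) * Real.sqrt (a ^ 2 + b ^ 2) = a ^ 2 + b ^ 2 :=
    Real.mul_self_sqrt hs.le
  rw [show Real.sqrt (a ^ 2 + b ^ 2) * (π / 2 - θ) + Real.sqrt (a ^ 2 + b ^ 2) * θ
      = Real.sqrt (a ^ 2 + b ^ 2) * (π / 2) by ring]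
  rw [div_mul_eq_mul_div, div_lt_iff₀ hb]
  nlinarith [mul_lt_mul_of_pos_left key hsq]
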